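/- Let u : ℝ^m → ℝ be a nonnegative locally Lipschitz weak solution of (1/a)div(a∇u) + b u + V u^σ ≤ 0 on ℝ^m, and let z : ℝ^m → ℝ be locally Lipschitz with z > 0 everywhere, which is a weak solution of (1/a)div(a∇z) + b z ≥ 0 on ℝ^m. Then w := u/z is nonnegative and locally Lipschitz, and for every nonnegative Lipschitz function ψ : ℝ^m → ℝ with compact support one has ∫ a V z^{σ+1} w^σ ψ dx ≤ ∫ a z² ⟨∇w, ∇ψ⟩ dx; that is, w is a weak solution of (1/(a z²)) div(a z² ∇w) + V z^{σ−1} w^σ ≤ 0 on ℝ^m. -/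

import Mathlib

open MeasureTheory Real RealInnerProductSpace Classical ENNReal

open MeasureTheory Real RealInnerProductSpace Classical ENNReal Set Metric

section LocLip

variable {α : Type*} [PseudoMetricSpace α]

/-- Product of locally Lipschitz real-valued functions is locally Lipschitz. -/
lemma locLip_mul {f g : α → ℝ} (hf : LocallyLipschitz f) (hg : LocallyLipschitz g) :
    LocallyLipschitz fun x => f x * g x := by
  intro x
  obtain ⟨Kf, t1, ht1, hf1⟩ := hf x
  obtain ⟨Kg, t2, ht2, hg1⟩ := hg x
  have hfc : ContinuousAt f x := hf.continuous.continuousAt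
  have hgc : ContinuousAt g x := hg.continuous.continuousAt
  have ht3 : {y | |f y| < |f x| + 1} ∈ nhds x := by
    have : ContinuousAt (fun y => |f y|) x := hfc.abs
    exact this.preimage_mem_nhds (Iio_mem_nhds (by linarith [abs_nonneg (f x)]))
  have ht4 : {y | |g y| < |g x| + 1} ∈ nhds x := by
    have : ContinuousAt (fun y => |g y|) x := hgc.abs
    exact this.preimage_mem_nhds (Iio_mem_nhds (by linarith [abs_nonneg (g x)]))
  set Mf : ℝ := |f x| + 1 with hMf
  set Mg : ℝ := |g x| + 1 with hMg
  have hMf0 : 0 < Mf := by positivity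
  have hMg0 : 0 < Mg := by positivity
  refine ⟨(Mf * Kg + Mg * Kf).toNNReal, t1 ∩ t2 ∩ ({y | |f y| < Mf} ∩ {y | |g y| < Mg}),
    Filter.inter_mem (Filter.inter_mem ht1 ht2) (Filter.inter_mem ht3 ht4), ?_⟩
  rw [lipschitzOnWith_iff_dist_le_mul]
  rintro p ⟨⟨hp1, hp2⟩, hp3, hp4⟩ q ⟨⟨hq1, hq2⟩, hq3, hq4⟩
  have e1 : dist (f p * g p) (f q * g q) ≤ |f p| * dist (g p) (g q) + |g q| * dist (f p) (f q) := by
    rw [Real.dist_eq, Real.dist_eq, Real.dist_eq]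
    calc |f p * g p - f q * g q| = |f p * (g p - g q) + g q * (f p - f q)| := by ring_nf
      _ ≤ |f p * (g p - g q)| + |g q * (f p - f q)| := abs_add_le _ _
      _ = |f p| * |g p - g q| + |g q| * |f p - f q| := by rw [abs_mul, abs_mul]
  have e2 : dist (g p) (g q) ≤ Kg * dist p q :=
    lipschitzOnWith_iff_dist_le_mul.1 hg1 p hp2 q hq2
  have e3 : dist (f p) (f q) ≤ Kf * dist p q :=
    lipschitzOnWith_iff_dist_le_mul.1 hf1 p hp1 q hq1
  have hb : (((Mf * Kg + Mg * Kf).toNNReal : NNReal) : ℝ) = Mf * Kg + Mg * Kf := by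
    exact Real.coe_toNNReal _ (by positivity)
  rw [hb]
  have h5 : |f p| * dist (g p) (g q) ≤ Mf * (Kg * dist p q) := by
    apply mul_le_mul (le_of_lt hp3) e2 dist_nonneg (le_of_lt hMf0)
  have h6 : |g q| * dist (f p) (f q) ≤ Mg * (Kf * dist p q) := by
    apply mul_le_mul (le_of_lt hq4) e3 dist_nonneg (le_of_lt hMg0)
  nlinarith [dist_nonneg (x := p) (y := q)]

/-- Reciprocal of a positive locally Lipschitz function is locally Lipschitz. -/
lemma locLip_inv {z : α → ℝ} (hz : LocallyLipschitz z) (h0 : ∀ x, 0 < z x) :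
    LocallyLipschitz fun x => (z x)⁻¹ := by
  intro x
  obtain ⟨K, t, ht, hK⟩ := hz x
  set c : ℝ := z x / 2 with hc
  have hc0 : 0 < c := by have := h0 x; positivity
  have ht2 : {y | c < z y} ∈ nhds x := by
    have : ContinuousAt z x := hz.continuous.continuousAt
    exact this.preimage_mem_nhds (Ioi_mem_nhds (by have := h0 x; simp [hc]; linarith))
  refine ⟨(K / (c * c)).toNNReal, t ∩ {y | c < z y}, Filter.inter_mem ht ht2, ?_⟩
  rw [lipschitzOnWith_iff_dist_le_mul]
  rintro p ⟨hp1, hp2⟩ q ⟨hq1, hq2⟩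
  have hp0 : (0:ℝ) < z p := lt_trans hc0 hp2
  have hq0 : (0:ℝ) < z q := lt_trans hc0 hq2
  have e1 : dist (z p)⁻¹ (z q)⁻¹ = |z q - z p| / (z p * z q) := by
    rw [Real.dist_eq, inv_sub_inv (ne_of_gt hp0) (ne_of_gt hq0), abs_div, abs_mul,
      abs_of_pos hp0, abs_of_pos hq0]
  have e2 : |z q - z p| ≤ K * dist p q := by
    have := lipschitzOnWith_iff_dist_le_mul.1 hK q hq1 p hp1
    rw [Real.dist_eq, dist_comm q p] at this; exact this
  have hp2' : c < z p := hp2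
  have hq2' : c < z q := hq2
  have e3 : c * c ≤ z p * z q := by nlinarith
  have hb : (((K / (c * c)).toNNReal : NNReal) : ℝ) = K / (c * c) := by
    exact Real.coe_toNNReal _ (by positivity)
  rw [hb, e1]
  rw [div_le_iff₀ (by positivity)]
  have : |z q - z p| * (c * c) ≤ (K * dist p q) * (z p * z q) := by
    apply mul_le_mul e2 e3 (by positivity) (by positivity)
  calc |z q - z p| = |z q - z p| * (c * c) / (c * c) := by field_simp
    _ ≤ (K * dist p q) * (z p * z q) / (c * c) := by
        apply div_le_div_of_nonneg_right this (by positivity) |>.trans_eq rfl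
    _ = K / (c * c) * dist p q * (z p * z q) := by ring

end LocLip

section GradBound

variable {E : Type*} [NormedAddCommGroup E] [InnerProductSpace ℝ E] [CompleteSpace E]

/-- On a compact set, gradients of a locally Lipschitz function are uniformly bounded. -/
lemma grad_bound {f : E → ℝ} (hf : LocallyLipschitz f) {K : Set E} (hK : IsCompact K) :
    ∃ C : ℝ, 0 ≤ C ∧ ∀ x ∈ K, ∀ g : E, HasGradientAt f g x → ‖g‖ ≤ C := by
  choose Kc t ht hlip using hf
  obtain ⟨s, hs⟩ := hK.elim_nhds_subcover (fun x => interior (t x))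
    (fun x _ => interior_mem_nhds.2 (ht x))
  refine ⟨(s.sup Kc : NNReal), (s.sup Kc).coe_nonneg, ?_⟩
  intro y hy g hg
  obtain ⟨x, hxs, hyx⟩ := Set.mem_iUnion₂.1 (hs.2 hy)
  have hnhds : t x ∈ nhds y :=
    Filter.mem_of_superset (isOpen_interior.mem_nhds hyx) interior_subset
  have h1 : ‖InnerProductSpace.toDual ℝ E g‖ ≤ Kc x :=
    (hg.hasFDerivAt).le_of_lipschitzOn hnhds (hlip x)
  rw [(InnerProductSpace.toDual ℝ E).norm_map g] at h1
  exact h1.trans (by exact_mod_cast NNReal.coe_le_coe.2 (Finset.le_sup hxs))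

end GradBound

section LipCompact

variable {E : Type*} [NormedAddCommGroup E] [NormedSpace ℝ E]

/-- A locally Lipschitz function is Lipschitz on a compact convex set. -/
lemma lipschitzOnWith_of_locallyLipschitz {f : E → ℝ} (hf : LocallyLipschitz f)
    {s : Set E} (hs : IsCompact s) (hconv : Convex ℝ s) :
    ∃ L : NNReal, LipschitzOnWith L f s := by
  choose Kc t ht hlip using hf
  obtain ⟨sf, hsf⟩ := hs.elim_nhds_subcover (fun x => interior (t x))
    (fun x _ => interior_mem_nhds.2 (ht x))
  by_cases hsf0 : sf = ∅
  · -- then s = ∅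
    refine ⟨1, ?_⟩
    intro p hp q hq
    exfalso
    have := hsf.2 hp
    simp [hsf0] at this
  obtain ⟨δ, hδ0, hball⟩ :=
    lebesgue_number_lemma_of_metric (ι := {x // x ∈ sf}) (c := fun i => interior (t i.1)) hs
      (fun i => isOpen_interior)
      (by intro y hy
          obtain ⟨x, hxs, hyx⟩ := Set.mem_iUnion₂.1 (hsf.2 hy)
          exact Set.mem_iUnion.2 ⟨⟨x, hxs⟩, hyx⟩)
  set L : NNReal := sf.sup Kc with hL
  -- small distance estimate
  have small : ∀ p ∈ s, ∀ q ∈ s, dist p q < δ → dist (f p) (f q) ≤ (L : ℝ) * dist p q := by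
    intro p hp q hq hpq
    obtain ⟨i, hi⟩ := hball p hp
    have hpti : p ∈ t i.1 := interior_subset (hi (mem_ball_self hδ0))
    have hqti : q ∈ t i.1 := interior_subset (hi (by rwa [mem_ball, dist_comm]))
    have := lipschitzOnWith_iff_dist_le_mul.1 (hlip i.1) p hpti q hqti
    refine this.trans (mul_le_mul_of_nonneg_right ?_ dist_nonneg)
    exact_mod_cast NNReal.coe_le_coe.2 (Finset.le_sup i.2)
  refine ⟨L, lipschitzOnWith_iff_dist_le_mul.2 ?_⟩
  intro p hp q hq
  rcases eq_or_ne p q with rfl | hne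
  · simp
  have hd0 : 0 < dist p q := dist_pos.2 hne
  obtain ⟨n, hn⟩ := exists_nat_gt (dist p q / δ)
  have hn0 : 0 < (n : ℝ) := lt_of_le_of_lt (by positivity) hn
  have hnn : 0 < n := by exact_mod_cast hn0
  have hstep : dist p q / n < δ := by
    rw [div_lt_iff₀ hn0]
    rw [div_lt_iff₀ hδ0] at hn
    linarith [hn]
  set P : ℕ → E := fun j => p + ((j : ℝ) / n) • (q - p) with hP
  have hP0 : P 0 = p := by simp [hP]
  have hPn : P n = q := by
    simp only [hP]
    rw [div_self (ne_of_gt hn0), one_smul]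
    abel
  have hPmem : ∀ j ≤ n, P j ∈ s := by
    intro j hj
    have h1 : (0:ℝ) ≤ (j : ℝ) / n := by positivity
    have h2 : (j : ℝ) / n ≤ 1 := by
      rw [div_le_one hn0]; exact_mod_cast hj
    have : P j = (1 - (j:ℝ)/n) • p + ((j:ℝ)/n) • q := by
      simp only [hP]
      module
    rw [this]
    exact hconv hp hq (by linarith) h1 (by ring)
  have hPd : ∀ j : ℕ, dist (P j) (P (j+1)) = dist p q / n := by
    intro j
    have : P (j+1) - P j = ((1:ℝ) / n) • (q - p) := by
      simp only [hP]
      push_cast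
      module
    rw [dist_eq_norm', this, norm_smul, dist_eq_norm']
    rw [norm_div, norm_one, Real.norm_natCast, div_mul_eq_mul_div, one_mul, norm_sub_rev q p]
  calc dist (f p) (f q) = dist (f (P 0)) (f (P n)) := by rw [hP0, hPn]
    _ ≤ ∑ j ∈ Finset.range n, dist (f (P j)) (f (P (j+1))) :=
        dist_le_range_sum_dist (fun j => f (P j)) n
    _ ≤ ∑ j ∈ Finset.range n, (L : ℝ) * (dist p q / n) := by
        apply Finset.sum_le_sum
        intro j hj
        rw [Finset.mem_range] at hj
        have h1 := small (P j) (hPmem j (le_of_lt hj)) (P (j+1)) (hPmem (j+1) hj)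
          (by rw [hPd j]; exact hstep)
        rw [hPd j] at h1
        exact h1
    _ = (L : ℝ) * dist p q := by
        rw [Finset.sum_const, Finset.card_range, nsmul_eq_mul]
        field_simp
end LipCompact

section LipGlobal

variable {E : Type*} [NormedAddCommGroup E] [NormedSpace ℝ E] [ProperSpace E]

/-- A locally Lipschitz function with compact support is (globally) Lipschitz. -/
lemma lipschitzWith_of_locallyLipschitz_of_hasCompactSupport {f : E → ℝ}
    (hf : LocallyLipschitz f) (hsupp : HasCompactSupport f) :
    ∃ L : NNReal, LipschitzWith L f := by
  obtain ⟨r, hr⟩ := hsupp.isBounded.subset_closedBall 0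
  set R : ℝ := max r 0 with hR
  have hsub : tsupport f ⊆ closedBall 0 R :=
    hr.trans (closedBall_subset_closedBall (le_max_left _ _))
  obtain ⟨L1, hL1⟩ := lipschitzOnWith_of_locallyLipschitz hf
    (isCompact_closedBall (0:E) (R+1)) (convex_closedBall 0 (R+1))
  obtain ⟨M, hM⟩ := hsupp.exists_bound_of_continuous hf.continuous
  have hM0 : 0 ≤ M := le_trans (norm_nonneg (f 0)) (hM 0)
  set Lr : ℝ := max (L1 : ℝ) M with hLr
  have hLr0 : 0 ≤ Lr := le_trans hM0 (le_max_right _ _)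
  have hzero : ∀ x : E, x ∉ closedBall 0 R → f x = 0 := by
    intro x hx
    exact image_eq_zero_of_notMem_tsupport (fun hc => hx (hsub hc))
  have key : ∀ p q : E, p ∈ closedBall 0 (R+1) → q ∉ closedBall 0 (R+1) →
      dist (f p) (f q) ≤ Lr * dist p q := by
    intro p q hp hq
    rw [mem_closedBall, dist_zero_right, not_le] at hq
    have hfq : f q = 0 := hzero q (by
      rw [mem_closedBall, dist_zero_right, not_le]
      linarith [hq, le_max_right r (0:ℝ)])
    by_cases hpR : p ∈ closedBall 0 R
    · rw [mem_closedBall, dist_zero_right] at hpR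
      have h1 : 1 ≤ dist p q := by
        have := dist_triangle (0:E) p q
        rw [dist_comm (0:E) p, dist_zero_right] at this
        have h2 : dist (0:E) q = ‖q‖ := by rw [dist_comm, dist_zero_right]
        rw [h2] at this
        linarith
      calc dist (f p) (f q) = ‖f p‖ := by rw [hfq, dist_zero_right]
        _ ≤ M := hM p
        _ ≤ M * dist p q := le_mul_of_one_le_right hM0 h1
        _ ≤ Lr * dist p q := mul_le_mul_of_nonneg_right (le_max_right _ _) dist_nonneg
    · rw [hzero p hpR, hfq]
      simp [mul_nonneg hLr0 dist_nonneg]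
  refine ⟨Lr.toNNReal, lipschitzWith_iff_dist_le_mul.2 ?_⟩
  intro p q
  have hb : ((Lr.toNNReal : NNReal) : ℝ) = Lr := Real.coe_toNNReal _ hLr0
  rw [hb]
  by_cases hp : p ∈ closedBall 0 (R+1) <;> by_cases hq : q ∈ closedBall 0 (R+1)
  · have := lipschitzOnWith_iff_dist_le_mul.1 hL1 p hp q hq
    exact this.trans (mul_le_mul_of_nonneg_right (le_max_left _ _) dist_nonneg)
  · exact key p q hp hq
  · rw [dist_comm (f p) (f q), dist_comm p q]
    exact key q p hq hp
  · have h0 : (0:ℝ) ≤ R := le_max_right _ _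
    have hp' : p ∉ closedBall 0 R := fun hc =>
      hp (closedBall_subset_closedBall (by linarith) hc)
    have hq' : q ∉ closedBall 0 R := fun hc =>
      hq (closedBall_subset_closedBall (by linarith) hc)
    rw [hzero p hp', hzero q hq']
    simp [mul_nonneg hLr0 dist_nonneg]

end LipGlobal

section Grad

variable {E : Type*} [NormedAddCommGroup E] [InnerProductSpace ℝ E] [CompleteSpace E]

/-- Product rule for gradients of real-valued functions. -/
lemma hasGradientAt_mul {f g : E → ℝ} {Gf Gg : E} {x : E}
    (hf : HasGradientAt f Gf x) (hg : HasGradientAt g Gg x) :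
    HasGradientAt (fun y => f y * g y) (f x • Gg + g x • Gf) x := by
  have h := hf.hasFDerivAt.mul hg.hasFDerivAt
  have heq : (InnerProductSpace.toDual ℝ E) (f x • Gg + g x • Gf) =
      f x • (InnerProductSpace.toDual ℝ E Gg) + g x • (InnerProductSpace.toDual ℝ E Gf) := by
    simp [map_add, _root_.map_smul]
  exact (hasGradientAt_iff_hasFDerivAt).2 (heq ▸ h)

/-- Gradient of the reciprocal. -/
lemma hasGradientAt_inv {z : E → ℝ} {Gz : E} {x : E}
    (hz : HasGradientAt z Gz x) (h0 : z x ≠ 0) :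
    HasGradientAt (fun y => (z y)⁻¹) (-(z x ^ 2)⁻¹ • Gz) x := by
  have hd : HasDerivAt (fun t : ℝ => t⁻¹) (-(z x ^ 2)⁻¹) (z x) := hasDerivAt_inv h0
  have h := hd.comp_hasFDerivAt x hz.hasFDerivAt
  have heq : (InnerProductSpace.toDual ℝ E) (-(z x ^ 2)⁻¹ • Gz) =
      (-(z x ^ 2)⁻¹) • (InnerProductSpace.toDual ℝ E Gz) := by simp [_root_.map_smul]
  exact (hasGradientAt_iff_hasFDerivAt).2 (heq ▸ h)

/-- Gradient of a function vanishing on a neighborhood is zero. -/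
lemma grad_eq_zero_of_nmem_tsupport {f : E → ℝ} {G : E} {x : E}
    (hx : x ∉ tsupport f) (h : HasGradientAt f G x) : G = 0 := by
  have hopen : IsOpen (tsupport f)ᶜ := (isClosed_tsupport f).isOpen_compl
  have hev : f =ᶠ[nhds x] (fun _ => (0:ℝ)) := by
    filter_upwards [hopen.mem_nhds hx] with y hy
    exact image_eq_zero_of_notMem_tsupport hy
  have h0 : HasGradientAt (fun _ => (0:ℝ)) G x := h.congr_of_eventuallyEq hev.symm
  exact h0.unique (hasGradientAt_const x 0)

end Grad

section Meas

variable {m : ℕ}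
local notation "E" m => EuclideanSpace ℝ (Fin m)

/-- A function that is a.e. a gradient of `f` is a.e. measurable. -/
lemma grad_aemeasurable {f : EuclideanSpace ℝ (Fin m) → ℝ}
    {g : EuclideanSpace ℝ (Fin m) → EuclideanSpace ℝ (Fin m)}
    (h : ∀ᵐ x ∂(volume : Measure (EuclideanSpace ℝ (Fin m))), HasGradientAt f (g x) x) :
    AEMeasurable g (volume : Measure (EuclideanSpace ℝ (Fin m))) := by
  refine ⟨fun x => (InnerProductSpace.toDual ℝ _).symm (fderiv ℝ f x), ?_, ?_⟩
  · exact ((InnerProductSpace.toDual ℝ _).symm.continuous.measurable).comp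
      (measurable_fderiv ℝ f)
  · filter_upwards [h] with x hx
    have h1 : fderiv ℝ f x = (InnerProductSpace.toDual ℝ _) (g x) := hx.hasFDerivAt.fderiv
    rw [h1, LinearIsometryEquiv.symm_apply_apply]

/-- Integrability of a measurable function bounded and a.e. supported on a compact set. -/
lemma integrable_of_ae_bound {f : EuclideanSpace ℝ (Fin m) → ℝ}
    (hm : AEStronglyMeasurable f (volume : Measure (EuclideanSpace ℝ (Fin m))))
    {K : Set (EuclideanSpace ℝ (Fin m))} (hK : IsCompact K) {C : ℝ}
    (h : ∀ᵐ x ∂(volume : Measure (EuclideanSpace ℝ (Fin m))),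
      ‖f x‖ ≤ K.indicator (fun _ => C) x) :
    Integrable f (volume : Measure (EuclideanSpace ℝ (Fin m))) := by
  refine Integrable.mono' ?_ hm h
  rw [integrable_indicator_iff hK.measurableSet]
  exact integrableOn_const hK.measure_lt_top.ne

end Meas

/-- Integrability of `c ⟪F, G⟫` when `F, G` are a.e.-bounded on a compact `K`,
`G` vanishes a.e. off `K`, and `c` is continuous. -/
lemma integrable_inner_term {m : ℕ}
    {F G : EuclideanSpace ℝ (Fin m) → EuclideanSpace ℝ (Fin m)}
    {c : EuclideanSpace ℝ (Fin m) → ℝ} (hc : Continuous c)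
    (hF : AEMeasurable F (volume : Measure (EuclideanSpace ℝ (Fin m))))
    (hG : AEMeasurable G (volume : Measure (EuclideanSpace ℝ (Fin m))))
    {K : Set (EuclideanSpace ℝ (Fin m))} (hK : IsCompact K) {CF CG : ℝ}
    (hFb : ∀ᵐ x ∂(volume : Measure (EuclideanSpace ℝ (Fin m))), x ∈ K → ‖F x‖ ≤ CF)
    (hGb : ∀ᵐ x ∂(volume : Measure (EuclideanSpace ℝ (Fin m))), x ∈ K → ‖G x‖ ≤ CG)
    (hG0 : ∀ᵐ x ∂(volume : Measure (EuclideanSpace ℝ (Fin m))), x ∉ K → G x = 0) :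
    Integrable (fun x => c x * ⟪F x, G x⟫) (volume : Measure (EuclideanSpace ℝ (Fin m))) := by
  obtain ⟨Cc, hCc⟩ := hK.exists_bound_of_continuousOn hc.continuousOn
  set C : ℝ := max Cc 0 * (max CF 0 * max CG 0) with hC
  have hmeas : AEStronglyMeasurable (fun x => c x * ⟪F x, G x⟫)
      (volume : Measure (EuclideanSpace ℝ (Fin m))) :=
    (hc.aemeasurable.mul (hF.inner hG)).aestronglyMeasurable
  refine integrable_of_ae_bound hmeas hK (C := C) ?_
  filter_upwards [hFb, hGb, hG0] with x h1 h2 h3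
  by_cases hx : x ∈ K
  · rw [Set.indicator_of_mem hx]
    have e1 : ‖c x * ⟪F x, G x⟫‖ ≤ ‖c x‖ * (‖F x‖ * ‖G x‖) := by
      rw [norm_mul, Real.norm_eq_abs ⟪F x, G x⟫]
      exact mul_le_mul_of_nonneg_left (abs_real_inner_le_norm _ _) (norm_nonneg _)
    refine e1.trans ?_
    have h1' : ‖F x‖ ≤ max CF 0 := (h1 hx).trans (le_max_left _ _)
    have h2' : ‖G x‖ ≤ max CG 0 := (h2 hx).trans (le_max_left _ _)
    have hcx : ‖c x‖ ≤ max Cc 0 := (hCc x hx).trans (le_max_left _ _)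
    have inner1 : ‖F x‖ * ‖G x‖ ≤ max CF 0 * max CG 0 :=
      mul_le_mul h1' h2' (norm_nonneg _) (le_max_right _ _)
    exact mul_le_mul hcx inner1 (by positivity) (le_max_right _ _)
  · rw [Set.indicator_of_notMem hx, h3 hx]
    simp


/-- Lemma 4.1: if `u ≥ 0` solves `(1/a)div(a∇u) + b u + V u^σ ≤ 0` weakly and `z > 0`
solves `(1/a)div(a∇z) + b z ≥ 0` weakly, then `w = u/z` is a nonnegative weak solution of
`(1/(a z²)) div(a z² ∇w) + V z^(σ-1) w^σ ≤ 0`. -/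
theorem quotient_is_weak_solution
    (m : ℕ) (hm : 1 ≤ m)
    (a : EuclideanSpace ℝ (Fin m) → ℝ) (ha_lip : LocallyLipschitz a) (ha_pos : ∀ x, 0 < a x)
    (V : EuclideanSpace ℝ (Fin m) → ℝ) (hV_meas : Measurable V)
    (hV_loc : LocallyIntegrable V (volume : Measure (EuclideanSpace ℝ (Fin m))))
    (hV_pos : ∀ᵐ x ∂(volume : Measure (EuclideanSpace ℝ (Fin m))), 0 < V x)
    (b : EuclideanSpace ℝ (Fin m) → ℝ) (hb_meas : Measurable b)
    (hb_loc : LocallyIntegrable b (volume : Measure (EuclideanSpace ℝ (Fin m))))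
    (σ : ℝ) (hσ : 1 < σ)
    (u : EuclideanSpace ℝ (Fin m) → ℝ) (hu_lip : LocallyLipschitz u) (hu_nonneg : ∀ x, 0 ≤ u x)
    (gu : EuclideanSpace ℝ (Fin m) → EuclideanSpace ℝ (Fin m))
    (hgu : ∀ᵐ x ∂(volume : Measure (EuclideanSpace ℝ (Fin m))), HasGradientAt u (gu x) x)
    (hu_weak : ∀ (ψ : EuclideanSpace ℝ (Fin m) → ℝ) (gψ : EuclideanSpace ℝ (Fin m) → EuclideanSpace ℝ (Fin m)),
      (∃ L, LipschitzWith L ψ) → (∀ x, 0 ≤ ψ x) → HasCompactSupport ψ →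
      (∀ᵐ x ∂(volume : Measure (EuclideanSpace ℝ (Fin m))), HasGradientAt ψ (gψ x) x) →
      (∫ x, a x * b x * u x * ψ x) + ∫ x, a x * V x * u x ^ σ * ψ x ≤
        ∫ x, a x * ⟪gu x, gψ x⟫)
    (z : EuclideanSpace ℝ (Fin m) → ℝ) (hz_lip : LocallyLipschitz z) (hz_pos : ∀ x, 0 < z x)
    (gz : EuclideanSpace ℝ (Fin m) → EuclideanSpace ℝ (Fin m))
    (hgz : ∀ᵐ x ∂(volume : Measure (EuclideanSpace ℝ (Fin m))), HasGradientAt z (gz x) x)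
    (hz_weak : ∀ (ψ : EuclideanSpace ℝ (Fin m) → ℝ) (gψ : EuclideanSpace ℝ (Fin m) → EuclideanSpace ℝ (Fin m)),
      (∃ L, LipschitzWith L ψ) → (∀ x, 0 ≤ ψ x) → HasCompactSupport ψ →
      (∀ᵐ x ∂(volume : Measure (EuclideanSpace ℝ (Fin m))), HasGradientAt ψ (gψ x) x) →
      ∫ x, a x * ⟪gz x, gψ x⟫ ≤ ∫ x, a x * b x * z x * ψ x) :
    (∀ x, 0 ≤ u x / z x) ∧ LocallyLipschitz (fun x => u x / z x) ∧
    ∀ (gw : EuclideanSpace ℝ (Fin m) → EuclideanSpace ℝ (Fin m)),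
      (∀ᵐ x ∂(volume : Measure (EuclideanSpace ℝ (Fin m))), HasGradientAt (fun y => u y / z y) (gw x) x) →
      ∀ (ψ : EuclideanSpace ℝ (Fin m) → ℝ) (gψ : EuclideanSpace ℝ (Fin m) → EuclideanSpace ℝ (Fin m)),
        (∃ L, LipschitzWith L ψ) → (∀ x, 0 ≤ ψ x) → HasCompactSupport ψ →
        (∀ᵐ x ∂(volume : Measure (EuclideanSpace ℝ (Fin m))), HasGradientAt ψ (gψ x) x) →
        ∫ x, a x * V x * z x ^ (σ + 1) * (u x / z x) ^ σ * ψ x ≤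
          ∫ x, a x * z x ^ (2:ℕ) * ⟪gw x, gψ x⟫ := by
  have hw_lip : LocallyLipschitz (fun x => u x / z x) := by
    have heq : (fun x => u x / z x) = fun x => u x * (z x)⁻¹ :=
      funext fun x => div_eq_mul_inv _ _
    rw [heq]
    exact locLip_mul hu_lip (locLip_inv hz_lip hz_pos)
  refine ⟨fun x => div_nonneg (hu_nonneg x) (hz_pos x).le, hw_lip, ?_⟩
  intro gw hgw ψ gψ hψlip hψ0 hψsupp hgψ
  obtain ⟨Lψ, hLψ⟩ := hψlip
  have cψ : Continuous ψ := hLψ.continuous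
  have cz : Continuous z := hz_lip.continuous
  have cu : Continuous u := hu_lip.continuous
  have ca : Continuous a := ha_lip.continuous
  have hK : IsCompact (tsupport ψ) := hψsupp
  -- the two test functions
  have hgφ1 : ∀ᵐ x ∂(volume : Measure (EuclideanSpace ℝ (Fin m))),
      HasGradientAt (fun y => z y * ψ y) (z x • gψ x + ψ x • gz x) x := by
    filter_upwards [hgz, hgψ] with x h1 h2
    exact hasGradientAt_mul h1 h2
  have hgφ2 : ∀ᵐ x ∂(volume : Measure (EuclideanSpace ℝ (Fin m))),
      HasGradientAt (fun y => u y * ψ y) (u x • gψ x + ψ x • gu x) x := by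
    filter_upwards [hgu, hgψ] with x h1 h2
    exact hasGradientAt_mul h1 h2
  have hφ1supp : HasCompactSupport (fun y => z y * ψ y) := hψsupp.mul_left
  have hφ2supp : HasCompactSupport (fun y => u y * ψ y) := hψsupp.mul_left
  have hφ1lip : ∃ L, LipschitzWith L (fun y => z y * ψ y) :=
    lipschitzWith_of_locallyLipschitz_of_hasCompactSupport
      (locLip_mul hz_lip hLψ.locallyLipschitz) hφ1supp
  have hφ2lip : ∃ L, LipschitzWith L (fun y => u y * ψ y) :=
    lipschitzWith_of_locallyLipschitz_of_hasCompactSupport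
      (locLip_mul hu_lip hLψ.locallyLipschitz) hφ2supp
  have Hu := hu_weak (fun y => z y * ψ y) (fun x => z x • gψ x + ψ x • gz x)
    hφ1lip (fun x => mul_nonneg (hz_pos x).le (hψ0 x)) hφ1supp hgφ1
  have Hz := hz_weak (fun y => u y * ψ y) (fun x => u x • gψ x + ψ x • gu x)
    hφ2lip (fun x => mul_nonneg (hu_nonneg x) (hψ0 x)) hφ2supp hgφ2
  -- a.e. measurability of the gradient fields
  have mgu := grad_aemeasurable hgu
  have mgz := grad_aemeasurable hgz
  have mgψ := grad_aemeasurable hgψ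
  -- gradient bounds
  obtain ⟨Cu, hCu0, hCu⟩ := grad_bound hu_lip hK
  obtain ⟨Cz, hCz0, hCz⟩ := grad_bound hz_lip hK
  have hgψbd : ∀ x G, HasGradientAt ψ G x → ‖G‖ ≤ (Lψ : ℝ) := by
    intro x G h
    have := h.hasFDerivAt.le_of_lipschitz hLψ
    rwa [(InnerProductSpace.toDual ℝ _).norm_map G] at this
  obtain ⟨Cψ, hCψ⟩ := hK.exists_bound_of_continuousOn cψ.continuousOn
  obtain ⟨Czb, hCzb⟩ := hK.exists_bound_of_continuousOn cz.continuousOn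
  obtain ⟨Cub, hCub⟩ := hK.exists_bound_of_continuousOn cu.continuousOn
  -- zero off support
  have hψzero : ∀ x, x ∉ tsupport ψ → ψ x = 0 := fun x hx =>
    image_eq_zero_of_notMem_tsupport hx
  have hgψzero : ∀ᵐ x ∂(volume : Measure (EuclideanSpace ℝ (Fin m))),
      x ∉ tsupport ψ → gψ x = 0 := by
    filter_upwards [hgψ] with x hx h
    exact grad_eq_zero_of_nmem_tsupport h hx
  -- integrability of the two gradient terms
  have Int3 : Integrable (fun x => a x * ⟪gu x, z x • gψ x + ψ x • gz x⟫)
      (volume : Measure (EuclideanSpace ℝ (Fin m))) := by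
    refine integrable_inner_term ca mgu
      ((cz.aemeasurable.smul mgψ).add (cψ.aemeasurable.smul mgz)) hK
      (CF := Cu) (CG := Czb * Lψ + Cψ * Cz) ?_ ?_ ?_
    · filter_upwards [hgu] with x hx hxK
      exact hCu x hxK _ hx
    · filter_upwards [hgu, hgz, hgψ] with x h1 h2 h3 hxK
      calc ‖z x • gψ x + ψ x • gz x‖ ≤ ‖z x • gψ x‖ + ‖ψ x • gz x‖ := norm_add_le _ _
        _ = ‖z x‖ * ‖gψ x‖ + ‖ψ x‖ * ‖gz x‖ := by rw [norm_smul, norm_smul]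
        _ ≤ Czb * Lψ + Cψ * Cz := by
            have e1 := mul_le_mul (hCzb x hxK) (hgψbd x _ h3) (norm_nonneg _)
              (le_trans (norm_nonneg _) (hCzb x hxK))
            have e2 := mul_le_mul (hCψ x hxK) (hCz x hxK _ h2) (norm_nonneg _)
              (le_trans (norm_nonneg _) (hCψ x hxK))
            linarith
    · filter_upwards [hgψzero] with x hx hxK
      rw [hψzero x hxK, hx hxK]
      simp
  have Int4 : Integrable (fun x => a x * ⟪gz x, u x • gψ x + ψ x • gu x⟫)
      (volume : Measure (EuclideanSpace ℝ (Fin m))) := by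
    refine integrable_inner_term ca mgz
      ((cu.aemeasurable.smul mgψ).add (cψ.aemeasurable.smul mgu)) hK
      (CF := Cz) (CG := Cub * Lψ + Cψ * Cu) ?_ ?_ ?_
    · filter_upwards [hgz] with x hx hxK
      exact hCz x hxK _ hx
    · filter_upwards [hgu, hgz, hgψ] with x h1 h2 h3 hxK
      calc ‖u x • gψ x + ψ x • gu x‖ ≤ ‖u x • gψ x‖ + ‖ψ x • gu x‖ := norm_add_le _ _
        _ = ‖u x‖ * ‖gψ x‖ + ‖ψ x‖ * ‖gu x‖ := by rw [norm_smul, norm_smul]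
        _ ≤ Cub * Lψ + Cψ * Cu := by
            have e1 := mul_le_mul (hCub x hxK) (hgψbd x _ h3) (norm_nonneg _)
              (le_trans (norm_nonneg _) (hCub x hxK))
            have e2 := mul_le_mul (hCψ x hxK) (hCu x hxK _ h1) (norm_nonneg _)
              (le_trans (norm_nonneg _) (hCψ x hxK))
            linarith
    · filter_upwards [hgψzero] with x hx hxK
      rw [hψzero x hxK, hx hxK]
      simp
  -- the key a.e. relation between gw, gu, gz
  have hrel : ∀ᵐ x ∂(volume : Measure (EuclideanSpace ℝ (Fin m))),
      (z x ^ (2:ℕ)) • gw x = z x • gu x - u x • gz x := by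
    filter_upwards [hgu, hgz, hgw] with x h1 h2 h3
    have hz0 : z x ≠ 0 := (hz_pos x).ne'
    have hq : HasGradientAt (fun y => u y / z y)
        (u x • (-(z x ^ 2)⁻¹ • gz x) + (z x)⁻¹ • gu x) x := by
      have heq : (fun y => u y / z y) = fun y => u y * (z y)⁻¹ :=
        funext fun y => div_eq_mul_inv _ _
      rw [heq]
      exact hasGradientAt_mul h1 (hasGradientAt_inv h2 hz0)
    rw [h3.unique hq]
    match_scalars <;> (field_simp; try ring)
  -- rewrite the right-hand side
  have hRHS : ∫ x, a x * z x ^ (2:ℕ) * ⟪gw x, gψ x⟫ =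
      (∫ x, a x * ⟪gu x, z x • gψ x + ψ x • gz x⟫) -
        ∫ x, a x * ⟪gz x, u x • gψ x + ψ x • gu x⟫ := by
    rw [← integral_sub Int3 Int4]
    refine integral_congr_ae ?_
    filter_upwards [hrel] with x hx
    have e1 : (z x ^ (2:ℕ)) * ⟪gw x, gψ x⟫ = ⟪z x • gu x - u x • gz x, gψ x⟫ := by
      rw [← hx, real_inner_smul_left]
    calc a x * z x ^ (2:ℕ) * ⟪gw x, gψ x⟫
        = a x * ((z x ^ (2:ℕ)) * ⟪gw x, gψ x⟫) := by ring
      _ = a x * ⟪z x • gu x - u x • gz x, gψ x⟫ := by rw [e1]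
      _ = a x * ⟪gu x, z x • gψ x + ψ x • gz x⟫ -
            a x * ⟪gz x, u x • gψ x + ψ x • gu x⟫ := by
          simp only [inner_sub_left, inner_add_right, real_inner_smul_left,
            real_inner_smul_right, real_inner_comm (gz x) (gu x)]
          ring
  -- rewrite the left-hand side
  have hLHS : ∫ x, a x * V x * z x ^ (σ + 1) * (u x / z x) ^ σ * ψ x =
      ∫ x, a x * V x * u x ^ σ * (z x * ψ x) := by
    refine integral_congr_ae (Filter.Eventually.of_forall fun x => ?_)
    have hz0 : (0:ℝ) < z x := hz_pos x
    have hzσ : z x ^ σ ≠ 0 := (Real.rpow_pos_of_pos hz0 σ).ne'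
    simp only [Real.div_rpow (hu_nonneg x) hz0.le, Real.rpow_add_one hz0.ne' σ]
    field_simp
  -- the b-terms agree
  have hbb : ∫ x, a x * b x * u x * (z x * ψ x) = ∫ x, a x * b x * z x * (u x * ψ x) :=
    integral_congr_ae (Filter.Eventually.of_forall fun x => by ring)
  rw [hLHS, hRHS]
  linarith [Hu, Hz, hbb]
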